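/- For the data of Construction 2, for every nonzero j ∈ (ℤ/2ℤ)⁴ with j ∉ {1000, 0100, 1100}, the class K + L_j ∈ ℤ⁵ cannot be written as a ℕ-linear (nonnegative integer) combination of the ten classes e_1, e_2, e_3, e_4, h_{12}, h_{13}, h_{14}, h_{23}, h_{24}, h_{34}; that is, K + L_j is not an effective class, encoding h⁰(K_{Y_4} + L_χ) = 0 for all characters χ ∉ {χ_{1000}, χ_{0100}, χ_{1100}}. -/

import Mathlib

open Finset

namespace DP5

/-- The Picard lattice of the del Pezzo surface `Y₄` of degree 5,
modeled as `ℤ⁵` with basis `l, e₁, e₂, e₃, e₄`. -/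
abbrev Pic : Type := Fin 5 → ℤ

def l  : Pic := ![1, 0, 0, 0, 0]
def e1 : Pic := ![0, 1, 0, 0, 0]
def e2 : Pic := ![0, 0, 1, 0, 0]
def e3 : Pic := ![0, 0, 0, 1, 0]
def e4 : Pic := ![0, 0, 0, 0, 1]

/-- The intersection form: `l·l = 1`, `eᵢ·eᵢ = -1`, mixed products `0`. -/
def inter (v w : Pic) : ℤ :=
  v 0 * w 0 - v 1 * w 1 - v 2 * w 2 - v 3 * w 3 - v 4 * w 4

def f1 : Pic := l - e1
def f2 : Pic := l - e2
def f3 : Pic := l - e3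
def f4 : Pic := l - e4

def h12 : Pic := l - e1 - e2
def h13 : Pic := l - e1 - e3
def h14 : Pic := l - e1 - e4
def h23 : Pic := l - e2 - e3
def h24 : Pic := l - e2 - e4
def h34 : Pic := l - e3 - e4

/-- The canonical class `K = -3l + e₁ + e₂ + e₃ + e₄` of `Y₄`. -/
def K : Pic := (-3 : ℤ) • l + e1 + e2 + e3 + e4

/-- Elements/characters of `(ℤ/2ℤ)⁴`, written as bit strings `σ₁σ₂σ₃σ₄`. -/
abbrev Char4 : Type := Fin 4 → ZMod 2

/-- The ten (−1)-curve classes on `Y₄`, generating the effective cone. -/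
def tenLines : Fin 10 → Pic := ![e1, e2, e3, e4, h12, h13, h14, h23, h24, h34]

/-- Construction 2: the classes `L_χ`. -/
def L2 (j : Char4) : Pic :=
  if j = ![0,0,0,1] then (2 : ℤ) • f1 + f2 - e3 else
  if j = ![0,0,1,0] then f2 + l else
  if j = ![0,1,0,0] then f1 + f2 + f3 - e4 else
  if j = ![1,0,0,0] then f1 + f2 + f3 - e4 else
  if j = ![0,0,1,1] then f1 + (2 : ℤ) • f2 - e3 - e4 else
  if j = ![0,1,0,1] then f2 + f3 else
  if j = ![0,1,1,0] then (2 : ℤ) • f1 + f2 - e3 - e4 else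
  if j = ![0,1,1,1] then f2 + f3 - e4 else
  if j = ![1,0,0,1] then f3 + f4 else
  if j = ![1,0,1,0] then f1 + f2 + f3 - e3 else
  if j = ![1,0,1,1] then f1 + f4 else
  if j = ![1,1,0,0] then f1 + f2 + f3 - e4 else
  if j = ![1,1,0,1] then f1 + f2 else
  if j = ![1,1,1,0] then l else
  if j = ![1,1,1,1] then f1 + f3 else 0

lemma vec4_eq_iff (a b c d a' b' c' d' : ZMod 2) :
    (![a,b,c,d] : Char4) = ![a',b',c',d'] ↔ a = a' ∧ b = b' ∧ c = c' ∧ d = d' := by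
  constructor
  · intro h
    exact ⟨congrFun h 0, congrFun h 1, congrFun h 2, congrFun h 3⟩
  · rintro ⟨rfl, rfl, rfl, rfl⟩; rfl

set_option maxHeartbeats 1600000 in
/-- Construction 2: for every nontrivial character `χ ∉ {χ_1000, χ_0100, χ_1100}`
the class `K + L_χ` is not an ℕ-combination of the ten (−1)-curve classes,
i.e. it is not effective (so `h⁰(K + L_χ) = 0`). -/
theorem construction2_KL_not_effective (j : Char4) (hj : j ≠ 0)
    (hj' : j ∉ ([![1,0,0,0], ![0,1,0,0], ![1,1,0,0]] : List Char4)) :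
    ¬ ∃ c : Fin 10 → ℕ, K + L2 j = ∑ i : Fin 10, (c i : ℤ) • tenLines i := by
  rintro ⟨c, hc⟩
  have hx : ∀ x : ZMod 2, x = 0 ∨ x = 1 := by decide
  have hjj : j = ![j 0, j 1, j 2, j 3] := by
    funext i; fin_cases i <;> rfl
  have g0 := congrFun hc 0
  have g1 := congrFun hc 1
  have g2 := congrFun hc 2
  have g3 := congrFun hc 3
  have g4 := congrFun hc 4
  clear hc
  rcases hx (j 0) with h0 | h0 <;> rcases hx (j 1) with h1 | h1 <;>
    rcases hx (j 2) with h2 | h2 <;> rcases hx (j 3) with h3 | h3 <;>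
    rw [h0, h1, h2, h3] at hjj <;> subst hjj <;>
    first
      | exact hj (by decide)
      | exact hj' (by decide)
      | (simp only [L2, vec4_eq_iff, zero_ne_one, one_ne_zero, and_true, true_and, and_false, false_and, if_true, if_false, ite_true, ite_false, eq_self_iff_true, K, l, e1, e2, e3, e4, f1, f2, f3, f4, h12, h13, h14, h23, h24,
          h34, tenLines, Fin.sum_univ_succ, Fin.sum_univ_zero, if_true, if_false,
          Finset.sum_apply, Pi.add_apply, Pi.sub_apply, Pi.smul_apply, Pi.zero_apply,
          smul_eq_mul, Matrix.cons_val_zero, Matrix.cons_val_one, Matrix.head_cons,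
          Matrix.cons_val_fin_one, Fin.isValue, Matrix.cons_val_succ, Fin.reduceSucc, Matrix.cons_val] at g0 g1 g2 g3 g4 <;>
         norm_num [show (2:ZMod 2)=0 from rfl] at g0 g1 g2 g3 g4 <;> omega)
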